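/- Let N be a positive integer, α, β divisors of N, A = N/α, B = N/β, and let a ∈ ℂ^{N×N}, g₁, g₂ ∈ ℂ^N. The spreading function of the Gabor multiplier G_a^{g₁,g₂} with lattice αℤ_N × βℤ_N satisfies η(G)(u,v) = (N/(αβ)) · [Σ_{l=0}^{α−1} Σ_{k=0}^{β−1} F_s a(u + Bk, v − Al)] · V_{g₁}g₂(u,v) for all u,v ∈ ℤ_N. -/

import Mathlib

open ComplexConjugate

set_option linter.unusedSectionVars false

variable (N : ℕ) [NeZero N]

noncomputable def E (m : ℤ) : ℂ := Complex.exp (2 * Real.pi * Complex.I * m / N)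

lemma E_add (m n : ℤ) : E N (m + n) = E N m * E N n := by
  rw [E, E, E, ← Complex.exp_add]; congr 1; push_cast; ring

lemma E_int_mul (q : ℤ) : E N (N * q) = 1 := by
  rw [E]
  have hN : (N : ℂ) ≠ 0 := Nat.cast_ne_zero.2 (NeZero.ne N)
  have h : 2 * Real.pi * Complex.I * ((N * q : ℤ) : ℂ) / N = q * (2 * Real.pi * Complex.I) := by
    push_cast; field_simp
  rw [h, Complex.exp_int_mul_two_pi_mul_I]

lemma E_congr {m n : ℤ} (h : m ≡ n [ZMOD N]) : E N m = E N n := by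
  obtain ⟨q, hq⟩ := h.dvd
  have : n = m + N * q := by linarith
  rw [this, E_add, E_int_mul, mul_one]

noncomputable def χ (x : ZMod N) : ℂ := E N (x.val : ℤ)

lemma val_intCast_back (x : ZMod N) : ((x.val : ℤ) : ZMod N) = x := by
  simp [ZMod.natCast_val, ZMod.cast_id]

lemma chi_intCast (m : ℤ) : χ N ((m : ZMod N)) = E N m := by
  apply E_congr
  exact (ZMod.intCast_eq_intCast_iff _ _ _).1 (val_intCast_back N (m : ZMod N))

lemma chi_natCast (m : ℕ) : χ N ((m : ZMod N)) = E N m := by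
  have := chi_intCast N (m : ℤ)
  rwa [Int.cast_natCast] at this

lemma chi_add (x y : ZMod N) : χ N (x + y) = χ N x * χ N y := by
  rw [← val_intCast_back N x, ← val_intCast_back N y, ← Int.cast_add,
    chi_intCast, E_add, chi_intCast, chi_intCast]

lemma chi_zero : χ N 0 = 1 := by
  rw [χ]; simp [E]

lemma E_eq_one_iff (m : ℤ) : E N m = 1 ↔ (N:ℤ) ∣ m := by
  constructor
  · intro h
    rw [E, Complex.exp_eq_one_iff] at h
    obtain ⟨n, hn⟩ := h
    have hN : (N : ℂ) ≠ 0 := Nat.cast_ne_zero.2 (NeZero.ne N)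
    have hπ : (Real.pi : ℂ) ≠ 0 := by exact_mod_cast Real.pi_ne_zero
    have hI : Complex.I ≠ 0 := Complex.I_ne_zero
    have h2 : (2 * (Real.pi:ℂ) * Complex.I) ≠ 0 := by
      simp [Complex.I_ne_zero, Complex.ofReal_ne_zero, Real.pi_ne_zero]
    have hn' : (2*(Real.pi:ℂ)*Complex.I) * (m:ℂ) = (2*(Real.pi:ℂ)*Complex.I) * ((n*N : ℤ):ℂ) := by
      field_simp at hn
      push_cast
      linear_combination (2*(Real.pi:ℂ)*Complex.I) * hn
    have hc : ((m : ℤ) : ℂ) = ((n * N : ℤ) : ℂ) := mul_left_cancel₀ h2 hn'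
    have hz : m = n * N := by exact_mod_cast hc
    exact ⟨n, by linarith⟩
  · rintro ⟨q, rfl⟩; exact E_int_mul N q

lemma chi_eq_one_iff (x : ZMod N) : χ N x = 1 ↔ x = 0 := by
  rw [χ, E_eq_one_iff]
  constructor
  · intro h
    have hdvd' : (N:ℕ) ∣ x.val := by exact_mod_cast h
    have := Nat.eq_zero_of_dvd_of_lt hdvd' (x.val_lt)
    exact (ZMod.val_eq_zero x).mp (by omega)
  · rintro rfl; simp

lemma val_natCast_back (x : ZMod N) : ((x.val : ℕ) : ZMod N) = x := by
  simp [ZMod.natCast_val, ZMod.cast_id]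

lemma chi_nsmul (w : ZMod N) (n : ℕ) : χ N ((n : ZMod N) * w) = χ N w ^ n := by
  induction n with
  | zero => simpa using chi_zero N
  | succ n ih =>
    push_cast
    rw [add_mul, one_mul, chi_add, ih, pow_succ]

lemma sum_pow_eq (b : ℕ) (z : ℂ) (hz : z ^ b = 1) :
    ∑ k ∈ Finset.range b, z ^ k = if z = 1 then (b : ℂ) else 0 := by
  by_cases h : z = 1
  · simp [h]
  · rw [geom_sum_eq h, hz]
    simp [h]

lemma mult_eq_zero_iff (b : ℕ) (hb : 0 < b) (hbdvd : b ∣ N) (x : ZMod N) :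
    ((N / b : ℕ) : ZMod N) * x = 0 ↔ b ∣ x.val := by
  conv_lhs => rw [← val_natCast_back N x]
  rw [← Nat.cast_mul, ZMod.natCast_eq_zero_iff]
  have hN : N = (N / b) * b := (Nat.div_mul_cancel hbdvd).symm
  have hpos : 0 < N / b := Nat.div_pos (Nat.le_of_dvd (Nat.pos_of_ne_zero (NeZero.ne N)) hbdvd) hb
  constructor
  · rintro ⟨q, hq⟩
    refine ⟨q, ?_⟩
    have h2 : N / b * (b * q) = N * q := by rw [← mul_assoc, Nat.div_mul_cancel hbdvd]
    have h3 : N / b * x.val = N / b * (b * q) := by rw [h2, hq]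
    exact Nat.eq_of_mul_eq_mul_left hpos h3
  · rintro ⟨q, hq⟩
    exact ⟨q, by rw [hq, ← mul_assoc, Nat.div_mul_cancel hbdvd]⟩

lemma sum_multiples (c : ℕ) (hc : 0 < c) (hcdvd : c ∣ N) (f : ZMod N → ℂ) :
    (∑ k' : ZMod N, if c ∣ k'.val then f k' else 0)
      = ∑ k ∈ Finset.range (N / c), f ((c : ZMod N) * (k : ZMod N)) := by
  rw [← Finset.sum_filter]
  have key : ∀ k < N / c, c * k < N := by
    intro k hk
    calc c * k < c * (N / c) := (Nat.mul_lt_mul_left hc).2 hk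
    _ = N := Nat.mul_div_cancel' hcdvd
  refine Finset.sum_nbij' (i := fun k' : ZMod N => k'.val / c)
    (j := fun k : ℕ => ((c * k : ℕ) : ZMod N)) ?_ ?_ ?_ ?_ ?_
  · intro k' _
    exact Finset.mem_range.2 (Nat.div_lt_div_of_lt_of_dvd hcdvd k'.val_lt)
  · intro k hk
    simp only [Finset.mem_range] at hk
    refine Finset.mem_filter.2 ⟨Finset.mem_univ _, ?_⟩
    rw [ZMod.val_cast_of_lt (key k hk)]
    exact Dvd.intro k rfl
  · intro k' hk'
    simp only [Finset.mem_filter] at hk'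
    show ((c * (k'.val / c) : ℕ) : ZMod N) = k'
    rw [Nat.mul_div_cancel' hk'.2, val_natCast_back]
  · intro k hk
    simp only [Finset.mem_range] at hk
    show ((c * k : ℕ) : ZMod N).val / c = k
    rw [ZMod.val_cast_of_lt (key k hk), Nat.mul_div_cancel_left k hc]
  · intro k' hk'
    simp only [Finset.mem_filter] at hk'
    show f k' = f ((c : ZMod N) * ((k'.val / c : ℕ) : ZMod N))
    congr 1
    rw [← Nat.cast_mul, Nat.mul_div_cancel' hk'.2, val_natCast_back]

lemma exp_int (m : ℤ) :
    Complex.exp (2 * Real.pi * Complex.I * (m : ℂ) / N) = χ N ((m : ZMod N)) := by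
  rw [chi_intCast]; rfl

lemma exp1 (b l : ℕ) (u : ZMod N) :
    Complex.exp (2 * Real.pi * Complex.I * (((b * l : ℕ) : ℂ) * (u.val : ℂ)) / N)
      = χ N ((b : ZMod N) * (l : ZMod N) * u) := by
  have h : (2 * Real.pi * Complex.I * (((b * l : ℕ) : ℂ) * (u.val : ℂ)) / N)
      = 2 * Real.pi * Complex.I * (((b * l * u.val : ℕ) : ℤ) : ℂ) / N := by
    push_cast; ring
  rw [h, exp_int]
  congr 1
  push_cast
  rw [val_natCast_back]

lemma exp2 (t v : ZMod N) :
    Complex.exp (-2 * Real.pi * Complex.I * ((t.val : ℂ) * (v.val : ℂ)) / N)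
      = χ N (-(t * v)) := by
  have h : (-2 * Real.pi * Complex.I * ((t.val : ℂ) * (v.val : ℂ)) / N)
      = 2 * Real.pi * Complex.I * (((-(t.val * v.val : ℕ) : ℤ)) : ℂ) / N := by
    push_cast; ring
  rw [h, exp_int]
  congr 1
  push_cast
  rw [val_natCast_back, val_natCast_back]

lemma exp3 (k' l' X Y : ZMod N) :
    Complex.exp (2 * Real.pi * Complex.I *
        ((((l'.val : ℤ) * ((X.val : ℕ) : ℤ) - (k'.val : ℤ) * ((Y.val : ℕ) : ℤ)) : ℤ) : ℂ) / N)
      = χ N (l' * X - k' * Y) := by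
  rw [exp_int]
  congr 1
  push_cast
  rw [val_natCast_back, val_natCast_back, val_natCast_back, val_natCast_back]

lemma shift_sum (C : ℂ) (g₁ g₂ : ZMod N → ℂ) (u v w p : ZMod N) :
    (∑ t : ZMod N, (C * (starRingEnd ℂ) (g₁ (t - u - w)) * g₂ (t - w) * χ N p) * χ N (-(t * v)))
      = (C * χ N (p - w * v)) *
        ∑ t : ZMod N, g₂ t * (starRingEnd ℂ) (g₁ (t - u)) * χ N (-(t * v)) := by
  rw [Finset.mul_sum]
  refine (Fintype.sum_equiv (Equiv.addRight w) _ _ ?_).symm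
  intro x
  show C * χ N (p - w * v) * (g₂ x * (starRingEnd ℂ) (g₁ (x - u)) * χ N (-(x * v)))
      = (C * (starRingEnd ℂ) (g₁ (x + w - u - w)) * g₂ (x + w - w) * χ N p) * χ N (-((x + w) * v))
  have h1 : x + w - u - w = x - u := by ring
  have h2 : x + w - w = x := by ring
  have h3 : χ N (-((x + w) * v)) = χ N (-(x * v)) * χ N (-(w * v)) := by
    rw [← chi_add]; congr 1; ring
  have h4 : χ N (p - w * v) = χ N p * χ N (-(w * v)) := by
    rw [← chi_add]; congr 1; ring
  rw [h1, h2, h3, h4]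
  ring

open ComplexConjugate in
lemma lhs_eq (α β : ℕ) (a : ZMod N → ZMod N → ℂ) (g₁ g₂ : ZMod N → ℂ) (u v : ZMod N) :
    (∑ t : ZMod N, (∑ k ∈ Finset.range (N / α), ∑ l ∈ Finset.range (N / β),
        a ((α : ZMod N) * k) ((β : ZMod N) * l) * conj (g₁ ((t - u) - (α : ZMod N) * k)) *
          g₂ (t - (α : ZMod N) * k) * χ N ((β : ZMod N) * l * u)) * χ N (-(t * v)))
    = (∑ k ∈ Finset.range (N / α), ∑ l ∈ Finset.range (N / β),
        a ((α : ZMod N) * k) ((β : ZMod N) * l) *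
          χ N ((β : ZMod N) * l * u - (α : ZMod N) * k * v)) *
      (∑ t : ZMod N, g₂ t * conj (g₁ (t - u)) * χ N (-(t * v))) := by
  simp_rw [Finset.sum_mul]
  rw [Finset.sum_comm]
  refine Eq.trans (Finset.sum_congr rfl fun k _ => Finset.sum_comm) ?_
  simp_rw [shift_sum N]

lemma split (A B k l : ℕ) (u v k' l' : ZMod N) :
    χ N (l' * (u + (B : ZMod N) * k) - k' * (v - (A : ZMod N) * l)) =
      χ N (l' * u - k' * v) * χ N ((B : ZMod N) * l') ^ k * χ N ((A : ZMod N) * k') ^ l := by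
  rw [← chi_nsmul, ← chi_nsmul, ← chi_add, ← chi_add]
  congr 1
  ring

lemma quad_swap (m n : ℕ) (F : ℕ → ℕ → ZMod N → ZMod N → ℂ) :
    ∑ l ∈ Finset.range n, ∑ k ∈ Finset.range m, ∑ k' : ZMod N, ∑ l' : ZMod N, F l k k' l'
      = ∑ k' : ZMod N, ∑ l' : ZMod N, ∑ l ∈ Finset.range n, ∑ k ∈ Finset.range m, F l k k' l' :=
  calc ∑ l ∈ Finset.range n, ∑ k ∈ Finset.range m, ∑ k' : ZMod N, ∑ l' : ZMod N, F l k k' l'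
      = ∑ l ∈ Finset.range n, ∑ k' : ZMod N, ∑ k ∈ Finset.range m, ∑ l' : ZMod N, F l k k' l' :=
        Finset.sum_congr rfl fun l _ => Finset.sum_comm
    _ = ∑ k' : ZMod N, ∑ l ∈ Finset.range n, ∑ k ∈ Finset.range m, ∑ l' : ZMod N, F l k k' l' :=
        Finset.sum_comm
    _ = ∑ k' : ZMod N, ∑ l ∈ Finset.range n, ∑ l' : ZMod N, ∑ k ∈ Finset.range m, F l k k' l' :=
        Finset.sum_congr rfl fun k' _ => Finset.sum_congr rfl fun l _ => Finset.sum_comm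
    _ = ∑ k' : ZMod N, ∑ l' : ZMod N, ∑ l ∈ Finset.range n, ∑ k ∈ Finset.range m, F l k k' l' :=
        Finset.sum_congr rfl fun k' _ => Finset.sum_comm

lemma inner_factor (m n : ℕ) (c z1 z2 : ℂ) :
    ∑ l ∈ Finset.range n, ∑ k ∈ Finset.range m, c * z1 ^ k * z2 ^ l
      = c * (∑ k ∈ Finset.range m, z1 ^ k) * (∑ l ∈ Finset.range n, z2 ^ l) := by
  simp_rw [← Finset.sum_mul, ← Finset.mul_sum]

lemma rhs_eq (α β : ℕ) (hα : 0 < α) (hβ : 0 < β) (hαdvd : α ∣ N) (hβdvd : β ∣ N)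
    (a : ZMod N → ZMod N → ℂ) (u v : ZMod N) :
    ((N : ℂ) / ((α : ℂ) * (β : ℂ))) *
      (∑ l ∈ Finset.range α, ∑ k ∈ Finset.range β, (1 / (N : ℂ)) *
        ∑ k' : ZMod N, ∑ l' : ZMod N, a k' l' *
          χ N (l' * (u + ((N / β : ℕ) : ZMod N) * (k : ZMod N)) -
               k' * (v - ((N / α : ℕ) : ZMod N) * (l : ZMod N))))
    = ∑ k ∈ Finset.range (N / α), ∑ l ∈ Finset.range (N / β),
        a ((α : ZMod N) * k) ((β : ZMod N) * l) *
          χ N ((β : ZMod N) * l * u - (α : ZMod N) * k * v) := by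
  have hz1 : ∀ l' : ZMod N, χ N (((N / β : ℕ) : ZMod N) * l') ^ β = 1 := by
    intro l'
    rw [← chi_nsmul, ← mul_assoc, ← Nat.cast_mul, Nat.mul_div_cancel' hβdvd,
      ZMod.natCast_self, zero_mul, chi_zero]
  have hz2 : ∀ k' : ZMod N, χ N (((N / α : ℕ) : ZMod N) * k') ^ α = 1 := by
    intro k'
    rw [← chi_nsmul, ← mul_assoc, ← Nat.cast_mul, Nat.mul_div_cancel' hαdvd,
      ZMod.natCast_self, zero_mul, chi_zero]
  simp_rw [split, ← mul_assoc, ← Finset.mul_sum]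
  rw [quad_swap]
  simp_rw [inner_factor, sum_pow_eq β _ (hz1 _), sum_pow_eq α _ (hz2 _),
    chi_eq_one_iff, mult_eq_zero_iff N β hβ hβdvd, mult_eq_zero_iff N α hα hαdvd,
    mul_ite, mul_zero, ite_mul, zero_mul]
  rw [show (∑ x : ZMod N, ∑ x_1 : ZMod N,
      if α ∣ x.val then if β ∣ x_1.val then a x x_1 * χ N (x_1 * u - x * v) * ↑β * ↑α else 0 else 0)
      = ∑ x : ZMod N, if α ∣ x.val then (∑ x_1 : ZMod N,
        if β ∣ x_1.val then a x x_1 * χ N (x_1 * u - x * v) * ↑β * ↑α else 0) else 0 from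
    Finset.sum_congr rfl fun x _ => by by_cases h : α ∣ x.val <;> simp [h]]
  rw [sum_multiples N α hα hαdvd]
  simp_rw [sum_multiples N β hβ hβdvd, ← Finset.sum_mul]
  have hN0 : (N : ℂ) ≠ 0 := Nat.cast_ne_zero.2 (NeZero.ne N)
  have hα0 : (α : ℂ) ≠ 0 := Nat.cast_ne_zero.2 hα.ne'
  have hβ0 : (β : ℂ) ≠ 0 := Nat.cast_ne_zero.2 hβ.ne'
  field_simp



/-- The spreading function of the finite Gabor multiplier `G_a^{g₁,g₂}` with lattice
`αℤ_N × βℤ_N` satisfies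
`η(G)(u,v) = (N/(αβ)) · [Σ_{l<α} Σ_{k<β} F_s a(u + Bk, v − Al)] · V_{g₁}g₂(u,v)`,
where `A = N/α`, `B = N/β`. -/
theorem spreading_function_gabor_multiplier (N α β : ℕ) [NeZero N]
    (hα : 0 < α) (hβ : 0 < β) (hαdvd : α ∣ N) (hβdvd : β ∣ N)
    (a : ZMod N → ZMod N → ℂ) (g₁ g₂ : ZMod N → ℂ) (u v : ZMod N) :
    (∑ t : ZMod N,
        (∑ k ∈ Finset.range (N / α), ∑ l ∈ Finset.range (N / β),
          a ((α : ZMod N) * (k : ZMod N)) ((β : ZMod N) * (l : ZMod N)) *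
            conj (g₁ ((t - u) - (α : ZMod N) * (k : ZMod N))) *
            g₂ (t - (α : ZMod N) * (k : ZMod N)) *
            Complex.exp (2 * Real.pi * Complex.I * (((β * l : ℕ) : ℂ) * (u.val : ℂ)) / N)) *
        Complex.exp (-2 * Real.pi * Complex.I * ((t.val : ℂ) * (v.val : ℂ)) / N)) =
      ((N : ℂ) / ((α : ℂ) * (β : ℂ))) *
        (∑ l ∈ Finset.range α, ∑ k ∈ Finset.range β,
          (1 / (N : ℂ)) * ∑ k' : ZMod N, ∑ l' : ZMod N, a k' l' *
            Complex.exp (2 * Real.pi * Complex.I *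
              ((((l'.val : ℤ) * (((u + ((N / β : ℕ) : ZMod N) * (k : ZMod N)).val : ℕ) : ℤ) -
                  (k'.val : ℤ) *
                    (((v - ((N / α : ℕ) : ZMod N) * (l : ZMod N)).val : ℕ) : ℤ)) : ℤ) : ℂ) / N)) *
        (∑ t : ZMod N, g₂ t * conj (g₁ (t - u)) *
          Complex.exp (-2 * Real.pi * Complex.I * ((t.val : ℂ) * (v.val : ℂ)) / N)) := by
  simp_rw [exp1, exp2, exp3]
  rw [lhs_eq, rhs_eq N α β hα hβ hαdvd hβdvd a u v]
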